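/- arXiv:2605.28356 — 2 statements merged into one kernel-verified Lean document; each statement's English description precedes it below -/
import Mathlib

section
/- The optimal value of the aggregated GEP problem is a lower bound on the optimal value of the full-scale GEP problem: for the single-generator, no-storage model, min over aggregated-feasible ẑ of f̂(ẑ) ≤ min over full-scale feasible z of f(z), assuming both minima are attained and all cost coefficients are nonnegative. -/
open Finset

/-- The optimal value of the aggregated GEP problem is a lower bound on the
optimal value of the full-scale GEP problem (single generator, no storage). -/
theorem stmt_4 {τ ι : Type*} [Fintype τ] [Fintype ι]
    (c : ι → Finset τ)
    (hdisj : ∀ r r', r ≠ r' → Disjoint (c r) (c r'))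
    (hcover : ∀ t : τ, ∃ r, t ∈ c r)
    (hne : ∀ r, (c r).Nonempty)
    (Δ Cinv C Cns : ℝ) (hΔ : 0 < Δ)
    (hCinv : 0 ≤ Cinv) (hC : 0 ≤ C) (hCns : 0 ≤ Cns)
    (D F : τ → ℝ) (fstar fhat : ℝ)
    (hfull : IsLeast {v | ∃ (x : ℝ) (p ens : τ → ℝ), 0 ≤ x ∧ (∀ t, 0 ≤ p t) ∧
        (∀ t, 0 ≤ ens t) ∧ (∀ t, Δ * p t + ens t = D t) ∧ (∀ t, p t ≤ F t * x) ∧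
        v = Cinv * x + ∑ t, (Δ * C * p t + Cns * ens t)} fstar)
    (hagg : IsLeast {v | ∃ (x : ℝ) (p ens : ι → ℝ), 0 ≤ x ∧ (∀ r, 0 ≤ p r) ∧
        (∀ r, 0 ≤ ens r) ∧
        (∀ r, Δ * p r + ens r = (∑ t ∈ c r, D t) / ((c r).card : ℝ)) ∧
        (∀ r, p r ≤ ((∑ t ∈ c r, F t) / ((c r).card : ℝ)) * x) ∧
        v = Cinv * x + ∑ r, ((c r).card : ℝ) * (Δ * C * p r + Cns * ens r)} fhat) :
    fhat ≤ fstar := by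
  obtain ⟨⟨x, p, ens, hx, hp, hens, hbal, hcap, hv⟩, _⟩ := hfull
  apply hagg.2
  have hcard : ∀ r, (0 : ℝ) < ((c r).card : ℝ) := fun r => by
    exact_mod_cast Finset.card_pos.mpr (hne r)
  refine ⟨x, fun r => (∑ t ∈ c r, p t) / ((c r).card : ℝ),
    fun r => (∑ t ∈ c r, ens t) / ((c r).card : ℝ), hx, ?_, ?_, ?_, ?_, ?_⟩
  · intro r
    exact div_nonneg (Finset.sum_nonneg fun t _ => hp t) (hcard r).le
  · intro r
    exact div_nonneg (Finset.sum_nonneg fun t _ => hens t) (hcard r).le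
  · intro r
    simp only
    rw [← mul_div_assoc, ← add_div]
    congr 1
    rw [Finset.mul_sum, ← Finset.sum_add_distrib]
    exact Finset.sum_congr rfl fun t _ => hbal t
  · intro r
    simp only
    rw [div_mul_eq_mul_div, div_le_div_iff_of_pos_right (hcard r), Finset.sum_mul]
    exact Finset.sum_le_sum fun t _ => hcap t
  · classical
    rw [hv]
    congr 1
    have huniv : (Finset.univ : Finset τ) = Finset.univ.biUnion c := by
      ext t
      simp only [Finset.mem_biUnion, Finset.mem_univ, true_and]
      exact ⟨fun _ => hcover t, fun _ => trivial⟩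
    rw [huniv, Finset.sum_biUnion (fun r _ r' _ h => hdisj r r' h)]
    refine Finset.sum_congr rfl fun r _ => ?_
    simp only
    have hn := (hcard r).ne'
    rw [Finset.sum_add_distrib, ← Finset.mul_sum, ← Finset.mul_sum]
    field_simp
end

section
/- Refining the partition cannot decrease the aggregated optimal value (lower bound improves): if partition P' of T refines partition P (every cluster of P' is contained in a cluster of P), then the optimal value of the aggregated single-generator no-storage GEP problem under P is at most that under P', which in turn is at most the full-scale optimal value. Here both aggregated problems use within-cluster averages of the data, the cost coefficients are nonnegative with C^ns ≥ Δ·C, and all minima are attained. -/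
open Finset

lemma key_avg {τ ι ι' : Type*} [Fintype τ] [Fintype ι] [Fintype ι']
    (c : ι → Finset τ) (c' : ι' → Finset τ)
    (hdisj : ∀ r r', r ≠ r' → Disjoint (c r) (c r'))
    (hne : ∀ r, (c r).Nonempty)
    (hdisj' : ∀ r r', r ≠ r' → Disjoint (c' r) (c' r'))
    (hcover' : ∀ t : τ, ∃ r, t ∈ c' r)
    (hne' : ∀ r, (c' r).Nonempty)
    (hrefine : ∀ r' : ι', ∃ r : ι, c' r' ⊆ c r)
    (Δ Cinv C Cns : ℝ) (D F : τ → ℝ) (v : ℝ)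
    (hv : ∃ (x : ℝ) (p ens : ι' → ℝ), 0 ≤ x ∧ (∀ r, 0 ≤ p r) ∧
        (∀ r, 0 ≤ ens r) ∧
        (∀ r, Δ * p r + ens r = (∑ t ∈ c' r, D t) / ((c' r).card : ℝ)) ∧
        (∀ r, p r ≤ ((∑ t ∈ c' r, F t) / ((c' r).card : ℝ)) * x) ∧
        v = Cinv * x + ∑ r, ((c' r).card : ℝ) * (Δ * C * p r + Cns * ens r)) :
    ∃ (x : ℝ) (p ens : ι → ℝ), 0 ≤ x ∧ (∀ r, 0 ≤ p r) ∧
        (∀ r, 0 ≤ ens r) ∧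
        (∀ r, Δ * p r + ens r = (∑ t ∈ c r, D t) / ((c r).card : ℝ)) ∧
        (∀ r, p r ≤ ((∑ t ∈ c r, F t) / ((c r).card : ℝ)) * x) ∧
        v = Cinv * x + ∑ r, ((c r).card : ℝ) * (Δ * C * p r + Cns * ens r) := by
  classical
  obtain ⟨x, p', ens', hx, hp', hens', hdem', hcap', hval'⟩ := hv
  set σ : ι' → ι := fun r' => (hrefine r').choose with hσdef
  have hσ : ∀ r', c' r' ⊆ c (σ r') := fun r' => (hrefine r').choose_spec
  have hcpos : ∀ r : ι, (0:ℝ) < ((c r).card : ℝ) := fun r => by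
    exact_mod_cast (hne r).card_pos
  have hcpos' : ∀ r : ι', (0:ℝ) < ((c' r).card : ℝ) := fun r => by
    exact_mod_cast (hne' r).card_pos
  have hbi : ∀ r : ι, (univ.filter (fun r' => σ r' = r)).biUnion c' = c r := by
    intro r
    ext t
    simp only [mem_biUnion, mem_filter, mem_univ, true_and]
    constructor
    · rintro ⟨r', hr', ht⟩
      exact hr' ▸ hσ r' ht
    · intro ht
      obtain ⟨r', ht'⟩ := hcover' t
      refine ⟨r', ?_, ht'⟩
      by_contra h
      exact absurd ((hdisj _ _ h).le_bot (mem_inter.2 ⟨hσ r' ht', ht⟩)) (by simp)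
  have hsum : ∀ (r : ι) (f : τ → ℝ),
      ∑ t ∈ c r, f t = ∑ r' ∈ univ.filter (fun r' => σ r' = r), ∑ t ∈ c' r', f t := by
    intro r f
    rw [← hbi r, Finset.sum_biUnion]
    intro a _ b _ hab
    exact hdisj' a b hab
  have hcard : ∀ r : ι, ((c r).card : ℝ) =
      ∑ r' ∈ univ.filter (fun r' => σ r' = r), ((c' r').card : ℝ) := by
    intro r
    have := hsum r (fun _ => (1:ℝ))
    simpa using this
  set wp : ι → ℝ := fun r => ∑ r' ∈ univ.filter (fun r' => σ r' = r), ((c' r').card : ℝ) * p' r' with hwp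
  set wens : ι → ℝ := fun r => ∑ r' ∈ univ.filter (fun r' => σ r' = r), ((c' r').card : ℝ) * ens' r' with hwens
  refine ⟨x, fun r => wp r / ((c r).card : ℝ), fun r => wens r / ((c r).card : ℝ),
    hx, ?_, ?_, ?_, ?_, ?_⟩
  · intro r
    apply div_nonneg _ (hcpos r).le
    exact Finset.sum_nonneg fun r' _ => mul_nonneg (hcpos' r').le (hp' r')
  · intro r
    apply div_nonneg _ (hcpos r).le
    exact Finset.sum_nonneg fun r' _ => mul_nonneg (hcpos' r').le (hens' r')
  · intro r
    have h1 : Δ * wp r + wens r = ∑ t ∈ c r, D t := by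
      rw [hsum r D, hwp, hwens, Finset.mul_sum, ← Finset.sum_add_distrib]
      refine Finset.sum_congr rfl fun r' _ => ?_
      have h2 : ((c' r').card : ℝ) * (Δ * p' r' + ens' r') = ∑ t ∈ c' r', D t := by
        rw [hdem' r']; field_simp
      rw [← h2]; ring
    rw [← h1]
    field_simp [(hcpos r).ne']
    try ring
  · intro r
    have h1 : wp r ≤ (∑ t ∈ c r, F t) * x := by
      rw [hsum r F, Finset.sum_mul, hwp]
      refine Finset.sum_le_sum fun r' _ => ?_
      have h2 := hcap' r'
      have h3 : ((c' r').card : ℝ) * p' r' ≤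
          ((c' r').card : ℝ) * (((∑ t ∈ c' r', F t) / ((c' r').card : ℝ)) * x) :=
        mul_le_mul_of_nonneg_left h2 (hcpos' r').le
      calc ((c' r').card : ℝ) * p' r' ≤ _ := h3
        _ = (∑ t ∈ c' r', F t) * x := by field_simp
    calc wp r / ((c r).card : ℝ) ≤ ((∑ t ∈ c r, F t) * x) / ((c r).card : ℝ) := by
          gcongr
      _ = ((∑ t ∈ c r, F t) / ((c r).card : ℝ)) * x := by ring
  · rw [hval']
    congr 1
    rw [← Finset.sum_fiberwise (g := σ) (f := fun r' => ((c' r').card : ℝ) * (Δ * C * p' r' + Cns * ens' r'))]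
    refine Finset.sum_congr rfl fun r _ => ?_
    have : ((c r).card : ℝ) * (Δ * C * (wp r / ((c r).card : ℝ)) + Cns * (wens r / ((c r).card : ℝ)))
        = Δ * C * wp r + Cns * wens r := by
      field_simp
      try ring
    rw [this, hwp, hwens, Finset.mul_sum, Finset.mul_sum, ← Finset.sum_add_distrib]
    refine Finset.sum_congr rfl fun r' _ => ?_
    ring


/-- Refining the partition cannot decrease the aggregated optimal value:
the coarse aggregated optimum is at most the fine aggregated optimum, which
is at most the full-scale optimum. -/
theorem stmt_16 {τ ι ι' : Type*} [Fintype τ] [Fintype ι] [Fintype ι']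
    (c : ι → Finset τ) (c' : ι' → Finset τ)
    (hdisj : ∀ r r', r ≠ r' → Disjoint (c r) (c r'))
    (hcover : ∀ t : τ, ∃ r, t ∈ c r)
    (hne : ∀ r, (c r).Nonempty)
    (hdisj' : ∀ r r', r ≠ r' → Disjoint (c' r) (c' r'))
    (hcover' : ∀ t : τ, ∃ r, t ∈ c' r)
    (hne' : ∀ r, (c' r).Nonempty)
    (hrefine : ∀ r' : ι', ∃ r : ι, c' r' ⊆ c r)
    (Δ Cinv C Cns : ℝ) (hΔ : 0 < Δ)
    (hCinv : 0 ≤ Cinv) (hC : 0 ≤ C) (hCns : 0 ≤ Cns) (hCnsC : Δ * C ≤ Cns)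
    (D F : τ → ℝ)
    (vfull vP vP' : ℝ)
    (hfull : IsLeast {v | ∃ (x : ℝ) (p ens : τ → ℝ), 0 ≤ x ∧ (∀ t, 0 ≤ p t) ∧
        (∀ t, 0 ≤ ens t) ∧ (∀ t, Δ * p t + ens t = D t) ∧ (∀ t, p t ≤ F t * x) ∧
        v = Cinv * x + ∑ t, (Δ * C * p t + Cns * ens t)} vfull)
    (hP : IsLeast {v | ∃ (x : ℝ) (p ens : ι → ℝ), 0 ≤ x ∧ (∀ r, 0 ≤ p r) ∧
        (∀ r, 0 ≤ ens r) ∧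
        (∀ r, Δ * p r + ens r = (∑ t ∈ c r, D t) / ((c r).card : ℝ)) ∧
        (∀ r, p r ≤ ((∑ t ∈ c r, F t) / ((c r).card : ℝ)) * x) ∧
        v = Cinv * x + ∑ r, ((c r).card : ℝ) * (Δ * C * p r + Cns * ens r)} vP)
    (hP' : IsLeast {v | ∃ (x : ℝ) (p ens : ι' → ℝ), 0 ≤ x ∧ (∀ r, 0 ≤ p r) ∧
        (∀ r, 0 ≤ ens r) ∧
        (∀ r, Δ * p r + ens r = (∑ t ∈ c' r, D t) / ((c' r).card : ℝ)) ∧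
        (∀ r, p r ≤ ((∑ t ∈ c' r, F t) / ((c' r).card : ℝ)) * x) ∧
        v = Cinv * x + ∑ r, ((c' r).card : ℝ) * (Δ * C * p r + Cns * ens r)} vP') :
    vP ≤ vP' ∧ vP' ≤ vfull := by
  constructor
  · exact hP.2 (key_avg c c' hdisj hne hdisj' hcover' hne' hrefine Δ Cinv C Cns D F vP' hP'.1)
  · refine hP'.2 (key_avg c' (fun t => ({t} : Finset τ)) hdisj' hne'
      (fun a b hab => by simpa using hab)
      (fun t => ⟨t, mem_singleton_self t⟩)
      (fun t => singleton_nonempty t)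
      (fun t => ⟨(hcover' t).choose, singleton_subset_iff.2 (hcover' t).choose_spec⟩)
      Δ Cinv C Cns D F vfull ?_)
    obtain ⟨x, p, ens, hx, hp, hens, hdem, hcap, hval⟩ := hfull.1
    refine ⟨x, p, ens, hx, hp, hens, ?_, ?_, ?_⟩
    · intro t; simpa using hdem t
    · intro t; simpa using hcap t
    · simpa using hval
end
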